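/- If S is a ∪-basis of a core compact space X, then the way-below relation ⋐ on S is distributive: whenever p ⋐ s ∪ t with p, s, t ∈ S, for every p' ∈ S with p' ⋐ p there exist s', t' ∈ S with s' ⋐ s, t' ⋐ t and p' ⊆ s' ∪ t' ⊆ p. -/

import Mathlib

variable {S : Type*} [SemilatticeSup S] [OrderBot S]

/-- A (nonempty) filter: an up-set in which any two elements have a common lower bound. -/
def IsFilt (F : Set S) : Prop :=
  F.Nonempty ∧ (∀ p ∈ F, ∀ q, p ≤ q → q ∈ F) ∧
    ∀ p ∈ F, ∀ q ∈ F, ∃ t ∈ F, t ≤ p ∧ t ≤ q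

/-- A filter is round if every member has a `r`-predecessor in the filter. -/
def IsRound (r : S → S → Prop) (F : Set S) : Prop :=
  ∀ p ∈ F, ∃ t ∈ F, r t p

/-- Primeness: `p ⊔ q ∈ P` implies `p ∈ P` or `q ∈ P`. -/
def IsPrimeFilt (P : Set S) : Prop :=
  ∀ p q, p ⊔ q ∈ P → p ∈ P ∨ q ∈ P

/-- The spectrum: proper round prime filters. -/
def Spec (r : S → S → Prop) : Type _ :=
  {P : Set S // IsFilt P ∧ IsRound r P ∧ IsPrimeFilt P ∧ ⊥ ∉ P}

/-- The basic open set `Ŝ_p`. -/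
def basicOpen (r : S → S → Prop) (p : S) : Set (Spec r) :=
  {P | p ∈ P.1}

instance specTop (r : S → S → Prop) : TopologicalSpace (Spec r) :=
  TopologicalSpace.generateFrom (Set.range (basicOpen r))

/-- Distributivity of `r`. -/
def IsDistrib (r : S → S → Prop) : Prop :=
  ∀ p s t, r p (s ⊔ t) → ∀ p', r p' p →
    ∃ s' t', r s' s ∧ r t' t ∧ p' ≤ s' ⊔ t' ∧ s' ⊔ t' ≤ p

/-- `r` is auxiliary. -/
def IsAux (r : S → S → Prop) : Prop :=
  (∀ p p' q' q, p ≤ p' → r p' q' → q' ≤ q → r p q) ∧ ∀ p q, r p q → p ≤ q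

/-- `r` is interpolative. -/
def IsInterp (r : S → S → Prop) : Prop :=
  ∀ p q, r p q → ∃ s, r p s ∧ r s q

/-- `r` is approximating: `≤` is the lower preorder of `r`. -/
def IsApprox (r : S → S → Prop) : Prop :=
  ∀ p q, p ≤ q ↔ ∀ t, r t p → r t q

/-- `r` is `∨`-preserving. -/
def IsSupPres (r : S → S → Prop) : Prop :=
  ∀ p p' q q', r p' p → r q' q → r (p' ⊔ q') (p ⊔ q)

/-- `S` with `r` is a `∨`-predomain. -/
def IsPredom (r : S → S → Prop) : Prop :=
  IsAux r ∧ IsApprox r ∧ IsInterp r ∧ IsSupPres r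

/-- Ideal: downward closed and closed under pairwise joins. -/
def IsIdl (I : Set S) : Prop :=
  (∀ p ∈ I, ∀ q, q ≤ p → q ∈ I) ∧ ∀ p ∈ I, ∀ q ∈ I, p ⊔ q ∈ I

/-- The way-below relation on subsets of a topological space:
every open cover of `q` has a finite subcover of `p`. -/
def WayBelow {X : Type*} [TopologicalSpace X] (p q : Set X) : Prop :=
  ∀ C : Set (Set X), (∀ U ∈ C, IsOpen U) → q ⊆ ⋃₀ C →
    ∃ F ⊆ C, F.Finite ∧ p ⊆ ⋃₀ F

/-- Core compactness. -/
def CoreCompact (X : Type*) [TopologicalSpace X] : Prop :=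
  ∀ (x : X) (U : Set X), IsOpen U → x ∈ U → ∃ V, IsOpen V ∧ x ∈ V ∧ WayBelow V U

/-- A `∪`-basis: a basis containing `∅` and closed under pairwise unions. -/
def IsUnionBasis {X : Type*} [TopologicalSpace X] (B : Set (Set X)) : Prop :=
  TopologicalSpace.IsTopologicalBasis B ∧ ∅ ∈ B ∧ ∀ p ∈ B, ∀ q ∈ B, p ∪ q ∈ B


section Aux
variable {X : Type*} [TopologicalSpace X]

lemma wb_mono {p' p q q' : Set X} (hp : p' ⊆ p) (h : WayBelow p q) (hq : q ⊆ q') :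
    WayBelow p' q' := fun C hC hcov => by
  obtain ⟨F, hF, hfin, hsub⟩ := h C hC (hq.trans hcov)
  exact ⟨F, hF, hfin, hp.trans hsub⟩

lemma wb_sub {p q : Set X} (hq : IsOpen q) (h : WayBelow p q) : p ⊆ q := by
  obtain ⟨F, hF, _, hsub⟩ := h {q} (by simpa) (by simp)
  exact hsub.trans ((Set.sUnion_subset_sUnion hF).trans (by simp))

lemma wb_empty (q : Set X) : WayBelow (∅ : Set X) q :=
  fun _ _ _ => ⟨∅, Set.empty_subset _, Set.finite_empty, by simp⟩

lemma wb_union {p₁ p₂ q : Set X} (h1 : WayBelow p₁ q) (h2 : WayBelow p₂ q) :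
    WayBelow (p₁ ∪ p₂) q := fun C hC hcov => by
  obtain ⟨F1, hF1, hf1, hs1⟩ := h1 C hC hcov
  obtain ⟨F2, hF2, hf2, hs2⟩ := h2 C hC hcov
  exact ⟨F1 ∪ F2, Set.union_subset hF1 hF2, hf1.union hf2,
    Set.union_subset (hs1.trans (Set.sUnion_subset_sUnion Set.subset_union_left))
      (hs2.trans (Set.sUnion_subset_sUnion Set.subset_union_right))⟩

lemma wb_sUnion {q : Set X} {F : Set (Set X)} (hfin : F.Finite)
    (h : ∀ V ∈ F, WayBelow V q) : WayBelow (⋃₀ F) q := by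
  refine Set.Finite.induction_on
    (motive := fun F _ => (∀ V ∈ F, WayBelow V q) → WayBelow (⋃₀ F) q) F hfin
    (fun _ => by simpa using wb_empty q) ?_ h
  intro a s _ _ ih h
  rw [Set.sUnion_insert]
  exact wb_union (h _ (Set.mem_insert _ _)) (ih fun V hV => h V (Set.mem_insert_of_mem _ hV))

lemma basis_sUnion {B : Set (Set X)} (hB : IsUnionBasis B) {F : Set (Set X)}
    (hfin : F.Finite) (h : ∀ V ∈ F, V ∈ B) : ⋃₀ F ∈ B := by
  refine Set.Finite.induction_on
    (motive := fun F _ => (∀ V ∈ F, V ∈ B) → ⋃₀ F ∈ B) F hfin (fun _ => by simpa using hB.2.1) ?_ h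
  intro a s _ _ ih h
  rw [Set.sUnion_insert]
  exact hB.2.2 _ (h _ (Set.mem_insert _ _)) _ (ih fun V hV => h V (Set.mem_insert_of_mem _ hV))

end Aux

theorem stmt6 {X : Type*} [TopologicalSpace X] (hcc : CoreCompact X)
    (B : Set (Set X)) (hB : IsUnionBasis B) (p s t : Set X)
    (hp : p ∈ B) (hs : s ∈ B) (ht : t ∈ B) (h : WayBelow p (s ∪ t)) :
    ∀ p' ∈ B, WayBelow p' p → ∃ s' ∈ B, ∃ t' ∈ B,
      WayBelow s' s ∧ WayBelow t' t ∧ p' ⊆ s' ∪ t' ∧ s' ∪ t' ⊆ p := by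
  intro p' hp' hpp'
  have hopenB : ∀ U ∈ B, IsOpen U := fun U hU => hB.1.isOpen hU
  have hps : p ⊆ s ∪ t := wb_sub ((hopenB s hs).union (hopenB t ht)) h
  -- For every x ∈ p choose a basis neighborhood inside p, way below s or t
  have key : ∀ x ∈ p, ∃ U ∈ B, x ∈ U ∧ U ⊆ p ∧ (WayBelow U s ∨ WayBelow U t) := by
    intro x hx
    rcases hps hx with hxs | hxt
    · obtain ⟨V, hVopen, hxV, hVwb⟩ := hcc x (s ∩ p) ((hopenB s hs).inter (hopenB p hp)) ⟨hxs, hx⟩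
      obtain ⟨U, hUB, hxU, hUV⟩ := hB.1.exists_subset_of_mem_open hxV hVopen
      have hwb : WayBelow U (s ∩ p) := wb_mono hUV hVwb (le_refl _)
      exact ⟨U, hUB, hxU,
        (wb_sub ((hopenB s hs).inter (hopenB p hp)) hwb).trans Set.inter_subset_right,
        Or.inl (wb_mono (le_refl _) hwb Set.inter_subset_left)⟩
    · obtain ⟨V, hVopen, hxV, hVwb⟩ := hcc x (t ∩ p) ((hopenB t ht).inter (hopenB p hp)) ⟨hxt, hx⟩
      obtain ⟨U, hUB, hxU, hUV⟩ := hB.1.exists_subset_of_mem_open hxV hVopen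
      have hwb : WayBelow U (t ∩ p) := wb_mono hUV hVwb (le_refl _)
      exact ⟨U, hUB, hxU,
        (wb_sub ((hopenB t ht).inter (hopenB p hp)) hwb).trans Set.inter_subset_right,
        Or.inr (wb_mono (le_refl _) hwb Set.inter_subset_left)⟩
  classical
  set C : Set (Set X) := {U | U ∈ B ∧ U ⊆ p ∧ (WayBelow U s ∨ WayBelow U t)} with hC
  have hcov : p ⊆ ⋃₀ C := fun x hx => by
    obtain ⟨U, hUB, hxU, hUp, hUwb⟩ := key x hx
    exact ⟨U, ⟨hUB, hUp, hUwb⟩, hxU⟩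
  obtain ⟨F, hFC, hFfin, hFsub⟩ := hpp' C (fun U hU => hopenB U hU.1) hcov
  refine ⟨⋃₀ {U ∈ F | WayBelow U s}, basis_sUnion hB (hFfin.subset (Set.sep_subset _ _))
      (fun V hV => (hFC hV.1).1),
    ⋃₀ {U ∈ F | ¬ WayBelow U s}, basis_sUnion hB (hFfin.subset (Set.sep_subset _ _))
      (fun V hV => (hFC hV.1).1),
    wb_sUnion (hFfin.subset (Set.sep_subset _ _)) (fun V hV => hV.2),
    wb_sUnion (hFfin.subset (Set.sep_subset _ _)) (fun V hV => ((hFC hV.1).2.2).resolve_left hV.2),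
    ?_, ?_⟩
  · refine hFsub.trans fun x hx => ?_
    obtain ⟨U, hUF, hxU⟩ := hx
    by_cases hws : WayBelow U s
    · exact Or.inl ⟨U, ⟨hUF, hws⟩, hxU⟩
    · exact Or.inr ⟨U, ⟨hUF, hws⟩, hxU⟩
  · refine Set.union_subset (Set.sUnion_subset fun V hV => (hFC hV.1).2.1)
      (Set.sUnion_subset fun V hV => (hFC hV.1).2.1)
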